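/- Let E be a non-reflexive Banach space with a subsymmetric Schauder basis (e_n) that is weakly null. Then E does not have the weakly compact approximation property: there is a weakly compact subset D ⊆ E (namely {e_n : n ∈ ℕ} ∪ {0}) and ε > 0 such that any bounded operator V on E with sup_n ‖e_n − V e_n‖ < ε fails to be weakly compact. -/

import Mathlib

open Filter Topology

section Aux
variable {E : Type*} [NormedAddCommGroup E] [NormedSpace ℝ E]

lemma exists_signs_aux (d : ℕ → E) (s : Finset ℕ) :
    ∀ (μ : ℕ → ℝ) (v : E), (∀ j ∈ s, |μ j| ≤ 1) →
      ∃ T ⊆ s, ‖v + ∑ j ∈ s, μ j • d j‖ ≤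
        ‖v + ((∑ j ∈ T, d j + ∑ j ∈ T, d j) - ∑ j ∈ s, d j)‖ := by
  classical
  induction s using Finset.induction_on with
  | empty =>
      intro μ v _
      exact ⟨∅, Finset.Subset.refl _, by simp⟩
  | insert i s hi ih =>
      intro μ v hμ
      have hμi : |μ i| ≤ 1 := hμ i (Finset.mem_insert_self i s)
      have hμs : ∀ j ∈ s, |μ j| ≤ 1 := fun j hj => hμ j (Finset.mem_insert_of_mem hj)
      set w := ∑ j ∈ s, μ j • d j with hw
      have hsum : ∑ j ∈ insert i s, μ j • d j = μ i • d i + w := Finset.sum_insert hi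
      set a : ℝ := (1 + μ i) / 2
      set b : ℝ := (1 - μ i) / 2
      have ha : 0 ≤ a := by
        have := abs_le.mp hμi; simp only [a]; linarith [this.1]
      have hb : 0 ≤ b := by
        have := abs_le.mp hμi; simp only [b]; linarith [this.2]
      have hab : a + b = 1 := by simp [a, b]; ring
      have hdecomp : v + (μ i • d i + w) = a • (v + d i + w) + b • (v - d i + w) := by
        simp only [a, b]
        match_scalars <;> ring
      have hkey : ‖v + (μ i • d i + w)‖ ≤
          max ‖v + d i + w‖ ‖v - d i + w‖ := by
        rw [hdecomp]
        calc ‖a • (v + d i + w) + b • (v - d i + w)‖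
            ≤ ‖a • (v + d i + w)‖ + ‖b • (v - d i + w)‖ := norm_add_le _ _
          _ = a * ‖v + d i + w‖ + b * ‖v - d i + w‖ := by
              rw [norm_smul, norm_smul, Real.norm_eq_abs, Real.norm_eq_abs,
                abs_of_nonneg ha, abs_of_nonneg hb]
          _ ≤ a * max ‖v + d i + w‖ ‖v - d i + w‖ + b * max ‖v + d i + w‖ ‖v - d i + w‖ := by
              gcongr
              · exact le_max_left _ _
              · exact le_max_right _ _
          _ = max ‖v + d i + w‖ ‖v - d i + w‖ := by rw [← add_mul, hab, one_mul]
      rcases max_cases ‖v + d i + w‖ ‖v - d i + w‖ with ⟨hm, _⟩ | ⟨hm, _⟩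
      · obtain ⟨T, hTs, hT⟩ := ih μ (v + d i) hμs
        refine ⟨insert i T, Finset.insert_subset_insert i hTs, ?_⟩
        have hiT : i ∉ T := fun h => hi (hTs h)
        rw [hsum]
        calc ‖v + (μ i • d i + w)‖ ≤ ‖v + d i + w‖ := le_trans hkey (le_of_eq hm)
          _ ≤ ‖v + d i + ((∑ j ∈ T, d j + ∑ j ∈ T, d j) - ∑ j ∈ s, d j)‖ := hT
          _ = ‖v + ((∑ j ∈ insert i T, d j + ∑ j ∈ insert i T, d j)
                - ∑ j ∈ insert i s, d j)‖ := by
              rw [Finset.sum_insert hiT, Finset.sum_insert hi]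
              congr 1
              abel
      · obtain ⟨T, hTs, hT⟩ := ih μ (v - d i) hμs
        refine ⟨T, hTs.trans (Finset.subset_insert i s), ?_⟩
        rw [hsum]
        calc ‖v + (μ i • d i + w)‖ ≤ ‖v - d i + w‖ := le_trans hkey (le_of_eq hm)
          _ ≤ ‖v - d i + ((∑ j ∈ T, d j + ∑ j ∈ T, d j) - ∑ j ∈ s, d j)‖ := hT
          _ = ‖v + ((∑ j ∈ T, d j + ∑ j ∈ T, d j) - ∑ j ∈ insert i s, d j)‖ := by
              rw [Finset.sum_insert hi]
              congr 1
              abel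

lemma geom_half_sum_le_two (s : Finset ℕ) : ∑ k ∈ s, ((1:ℝ)/2)^k ≤ 2 := by
  classical
  set N := s.sup id + 1
  have hsub : s ⊆ Finset.range N := by
    intro k hk
    exact Finset.mem_range.mpr (Nat.lt_succ_of_le (Finset.le_sup (f := id) hk))
  calc ∑ k ∈ s, ((1:ℝ)/2)^k ≤ ∑ k ∈ Finset.range N, ((1:ℝ)/2)^k := by
        apply Finset.sum_le_sum_of_subset_of_nonneg hsub
        intro i _ _
        positivity
    _ ≤ 2 := by
        rw [geom_sum_eq (by norm_num : ((1:ℝ)/2) ≠ 1) N]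
        have h2 : (0:ℝ) ≤ (1/2)^N := by positivity
        have h3 : (((1:ℝ)/2)^N - 1)/((1:ℝ)/2 - 1) = 2 - 2*(1/2)^N := by ring
        rw [h3]; linarith

lemma mult_bound (e : ℕ → E) (K : ℝ)
    (huncond : ∀ (a : ℕ → ℝ) (s t : Finset ℕ), s ⊆ t →
      ‖∑ j ∈ s, a j • e j‖ ≤ K * ‖∑ j ∈ t, a j • e j‖)
    (g μ : ℕ → ℝ) (T : Finset ℕ) (hμ : ∀ j ∈ T, |μ j| ≤ 2) :
    ‖∑ j ∈ T, (μ j * g j) • e j‖ ≤ (2*(2*K+1)) * ‖∑ j ∈ T, g j • e j‖ := by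
  classical
  set d : ℕ → E := fun j => g j • e j with hd
  have hμ' : ∀ j ∈ T, |μ j / 2| ≤ 1 := by
    intro j hj
    rw [abs_div, abs_two]
    linarith [hμ j hj]
  obtain ⟨T', hT', hb⟩ := exists_signs_aux d T (fun j => μ j / 2) 0 hμ'
  simp only [zero_add] at hb
  have e1 : ∑ j ∈ T, (μ j * g j) • e j = (2:ℝ) • ∑ j ∈ T, (μ j / 2) • d j := by
    rw [Finset.smul_sum]
    apply Finset.sum_congr rfl
    intro j _
    simp only [d, smul_smul]
    congr 1
    ring
  have e2 : ‖∑ j ∈ T, (μ j * g j) • e j‖ = 2 * ‖∑ j ∈ T, (μ j / 2) • d j‖ := by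
    rw [e1, norm_smul, Real.norm_ofNat]
  have h3 : ‖(∑ j ∈ T', d j + ∑ j ∈ T', d j) - ∑ j ∈ T, d j‖ ≤
      2 * ‖∑ j ∈ T', d j‖ + ‖∑ j ∈ T, d j‖ := by
    calc ‖(∑ j ∈ T', d j + ∑ j ∈ T', d j) - ∑ j ∈ T, d j‖
        ≤ ‖∑ j ∈ T', d j + ∑ j ∈ T', d j‖ + ‖∑ j ∈ T, d j‖ := norm_sub_le _ _
      _ ≤ (‖∑ j ∈ T', d j‖ + ‖∑ j ∈ T', d j‖) + ‖∑ j ∈ T, d j‖ := by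
          gcongr; exact norm_add_le _ _
      _ = 2 * ‖∑ j ∈ T', d j‖ + ‖∑ j ∈ T, d j‖ := by ring
  have h4 : ‖∑ j ∈ T', d j‖ ≤ K * ‖∑ j ∈ T, g j • e j‖ := huncond g T' T hT'
  have h5 : ‖∑ j ∈ T, d j‖ = ‖∑ j ∈ T, g j • e j‖ := rfl
  rw [e2]
  calc 2 * ‖∑ j ∈ T, (μ j / 2) • d j‖
      ≤ 2 * ‖(∑ j ∈ T', d j + ∑ j ∈ T', d j) - ∑ j ∈ T, d j‖ := by linarith
    _ ≤ 2 * (2 * (K * ‖∑ j ∈ T, g j • e j‖) + ‖∑ j ∈ T, g j • e j‖) := by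
        rw [← h5]; linarith
    _ = (2*(2*K+1)) * ‖∑ j ∈ T, g j • e j‖ := by ring

lemma bnorm_bound (e : ℕ → E) (b : ℕ → E →L[ℝ] ℝ)
    (hexp : ∀ x : E, Tendsto (fun n => ∑ j ∈ Finset.range n, b j x • e j) atTop (nhds x))
    (K : ℝ)
    (huncond : ∀ (a : ℕ → ℝ) (s t : Finset ℕ), s ⊆ t →
      ‖∑ j ∈ s, a j • e j‖ ≤ K * ‖∑ j ∈ t, a j • e j‖)
    (i : ℕ) (x : E) : |b i x| * ‖e i‖ ≤ K * ‖x‖ := by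
  classical
  have hle : ∀ N, i < N → |b i x| * ‖e i‖ ≤
      K * ‖∑ j ∈ Finset.range N, b j x • e j‖ := by
    intro N hN
    have := huncond (fun j => b j x) {i} (Finset.range N)
      (by simp [Finset.singleton_subset_iff, Finset.mem_range, hN])
    simpa [norm_smul] using this
  have htend : Tendsto (fun N => K * ‖∑ j ∈ Finset.range N, b j x • e j‖)
      atTop (nhds (K * ‖x‖)) :=
    (((hexp x).norm).const_mul K)
  refine ge_of_tendsto htend ?_
  filter_upwards [eventually_gt_atTop i] with N hN using hle N hN

lemma e_ne_zero (e : ℕ → E) (b : ℕ → E →L[ℝ] ℝ)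
    (hbio : ∀ i j, b i (e j) = if i = j then 1 else 0) (i : ℕ) : e i ≠ 0 := by
  intro h
  have := hbio i i
  rw [h] at this
  simp at this

lemma exists_delta (e : ℕ → E) (b : ℕ → E →L[ℝ] ℝ)
    (hbio : ∀ i j, b i (e j) = if i = j then 1 else 0)
    (hsubsym : ∀ m : ℕ → ℕ, StrictMono m → ∃ c : ℝ, 0 < c ∧
      ∀ (a : ℕ → ℝ) (s : Finset ℕ),
        c * ‖∑ j ∈ s, a j • e j‖ ≤ ‖∑ j ∈ s, a j • e (m j)‖ ∧
        ‖∑ j ∈ s, a j • e (m j)‖ ≤ c⁻¹ * ‖∑ j ∈ s, a j • e j‖) :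
    ∃ δ : ℝ, 0 < δ ∧ ∀ n, δ ≤ ‖e n‖ := by
  classical
  by_contra hcon
  push_neg at hcon
  have hsmall : ∀ δ : ℝ, 0 < δ → ∃ n, ‖e n‖ < δ := by
    intro δ hδ
    obtain ⟨n, hn⟩ := hcon δ hδ
    exact ⟨n, hn⟩
  have hpos : ∀ i, 0 < ‖e i‖ := fun i => norm_pos_iff.mpr (e_ne_zero e b hbio i)
  have h : ∀ (prev : ℕ) (δ : ℝ), 0 < δ → ∃ m, prev < m ∧ ‖e m‖ < δ := by
    intro prev δ hδ
    set δ' : ℝ := min δ ((Finset.range (prev+1)).inf' (by simp) (fun i => ‖e i‖)) with hδ'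
    have hδ'pos : 0 < δ' := by
      apply lt_min hδ
      apply (Finset.lt_inf'_iff _).mpr
      intro i _
      exact hpos i
    obtain ⟨m, hm⟩ := hsmall δ' hδ'pos
    refine ⟨m, ?_, lt_of_lt_of_le hm (min_le_left _ _)⟩
    by_contra hle
    push_neg at hle
    have : δ' ≤ ‖e m‖ := by
      refine le_trans (min_le_right _ _) ?_
      exact Finset.inf'_le _ (Finset.mem_range.mpr (Nat.lt_succ_of_le hle))
    exact absurd hm (not_lt.mpr this)
  set θ : ℕ → ℝ := fun k => (1/2)^k * ‖e k‖ with hθdef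
  have hθ : ∀ k, 0 < θ k := fun k => mul_pos (by positivity) (hpos k)
  choose f hflt hfsmall using h
  set ψ : ℕ → ℕ := fun k => Nat.rec (f 0 (θ 0) (hθ 0)) (fun k' p => f p (θ (k'+1)) (hθ (k'+1))) k
    with hψdef
  have hψmono : StrictMono ψ := by
    apply strictMono_nat_of_lt_succ
    intro k
    exact hflt (ψ k) (θ (k+1)) (hθ (k+1))
  have hψsmall : ∀ k, ‖e (ψ k)‖ < θ k := by
    intro k
    cases k with
    | zero => exact hfsmall 0 (θ 0) (hθ 0)
    | succ k' => exact hfsmall (ψ k') (θ (k'+1)) (hθ (k'+1))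
  obtain ⟨c, hc, hcineq⟩ := hsubsym ψ hψmono
  have hck : ∀ k, c < (1/2)^k := by
    intro k
    have h1 := (hcineq (fun _ => 1) {k}).1
    simp only [Finset.sum_singleton, one_smul] at h1
    have h2 : c * ‖e k‖ < (1/2)^k * ‖e k‖ := lt_of_le_of_lt h1 (hψsmall k)
    exact lt_of_mul_lt_mul_right h2 (hpos k).le
  obtain ⟨k, hk⟩ := exists_pow_lt_of_lt_one hc (by norm_num : (1:ℝ)/2 < 1)
  exact absurd (hck k) (not_lt.mpr hk.le)

lemma gliding_hump (e : ℕ → E) (b : ℕ → E →L[ℝ] ℝ) (V : E →L[ℝ] E)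
    (hexp : ∀ x : E, Tendsto (fun n => ∑ j ∈ Finset.range n, b j x • e j) atTop (nhds x))
    (hwk : ∀ i : ℕ, Tendsto (fun m => b i (V (e m))) atTop (nhds 0))
    (η : ℕ → ℝ) (hη : ∀ k, 0 < η k) :
    ∃ n N : ℕ → ℕ, N 0 = 0 ∧ (∀ k, N k ≤ n k ∧ n k < N (k+1)) ∧
      (∀ k, ∑ i ∈ Finset.range (N k), |b i (V (e (n k)))| * ‖e i‖ < η k / 2) ∧
      (∀ k, ‖V (e (n k)) - ∑ i ∈ Finset.range (N (k+1)), b i (V (e (n k))) • e i‖ < η k / 2) := by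
  classical
  have step : ∀ (prevN : ℕ) (ηk : ℝ), 0 < ηk → ∃ mM : ℕ × ℕ,
      prevN ≤ mM.1 ∧ mM.1 < mM.2 ∧
      (∑ i ∈ Finset.range prevN, |b i (V (e mM.1))| * ‖e i‖ < ηk / 2) ∧
      ‖V (e mM.1) - ∑ i ∈ Finset.range mM.2, b i (V (e mM.1)) • e i‖ < ηk / 2 := by
    intro prevN ηk hηk
    have htend : Tendsto (fun m => ∑ i ∈ Finset.range prevN, |b i (V (e m))| * ‖e i‖)
        atTop (nhds 0) := by
      have : Tendsto (fun m => ∑ i ∈ Finset.range prevN, |b i (V (e m))| * ‖e i‖)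
          atTop (nhds (∑ i ∈ Finset.range prevN, (0:ℝ))) := by
        apply tendsto_finset_sum
        intro i _
        simpa using ((hwk i).abs.mul_const ‖e i‖)
      simpa using this
    have h1 : ∀ᶠ m in atTop, ∑ i ∈ Finset.range prevN, |b i (V (e m))| * ‖e i‖ < ηk / 2 :=
      htend.eventually (gt_mem_nhds (by linarith))
    obtain ⟨m, hm1, hm2⟩ := (h1.and (eventually_ge_atTop prevN)).exists
    have htend2 : Tendsto (fun M => ‖V (e m) - ∑ i ∈ Finset.range M, b i (V (e m)) • e i‖)
        atTop (nhds 0) := by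
      have := (tendsto_const_nhds (x := V (e m)) (f := atTop)).sub (hexp (V (e m)))
      simpa using this.norm
    have h2 : ∀ᶠ M in atTop,
        ‖V (e m) - ∑ i ∈ Finset.range M, b i (V (e m)) • e i‖ < ηk / 2 :=
      htend2.eventually (gt_mem_nhds (by linarith))
    obtain ⟨M, hM1, hM2⟩ := (h2.and (eventually_gt_atTop m)).exists
    exact ⟨(m, M), hm2, hM2, hm1, hM1⟩
  choose F hF1 hF2 hF3 hF4 using step
  set P : ℕ → ℕ × ℕ := fun k =>
    Nat.rec (F 0 (η 0) (hη 0)) (fun k' prev => F prev.2 (η (k'+1)) (hη (k'+1))) k with hP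
  set n : ℕ → ℕ := fun k => (P k).1 with hn
  set N : ℕ → ℕ := fun k => Nat.casesOn k 0 (fun k' => (P k').2) with hN
  have hPk : ∀ k, P k = F (N k) (η k) (hη k) := by
    intro k
    cases k with
    | zero => rfl
    | succ k' => rfl
  refine ⟨n, N, rfl, ?_, ?_, ?_⟩
  · intro k
    constructor
    · have := hF1 (N k) (η k) (hη k); rw [← hPk k] at this; exact this
    · have := hF2 (N k) (η k) (hη k); rw [← hPk k] at this; exact this
  · intro k
    have := hF3 (N k) (η k) (hη k); rw [← hPk k] at this; exact this
  · intro k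
    have := hF4 (N k) (η k) (hη k); rw [← hPk k] at this
    have hNk : N (k+1) = (P k).2 := rfl
    rw [hNk]; exact this

end Aux

section Aux2
variable {E : Type*} [NormedAddCommGroup E] [NormedSpace ℝ E] [CompleteSpace E]

lemma build_S (e : ℕ → E) (b : ℕ → E →L[ℝ] ℝ)
    (hbio : ∀ i j, b i (e j) = if i = j then 1 else 0)
    (hexp : ∀ x : E, Tendsto (fun n => ∑ j ∈ Finset.range n, b j x • e j) atTop (nhds x))
    (n : ℕ → ℕ) (c : ℝ) (hc : 0 < c)
    (hupper : ∀ (a : ℕ → ℝ) (s : Finset ℕ),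
      ‖∑ j ∈ s, a j • e (n j)‖ ≤ c⁻¹ * ‖∑ j ∈ s, a j • e j‖) :
    ∃ S : E →L[ℝ] E,
      (∀ (a : ℕ → ℝ) (s : Finset ℕ), S (∑ k ∈ s, a k • e k) = ∑ k ∈ s, a k • e (n k)) ∧
      ∀ x, ‖S x‖ ≤ c⁻¹ * ‖x‖ := by
  classical
  set Q : ℕ → E → E := fun N x => ∑ j ∈ Finset.range N, b j x • e (n j) with hQ
  set P : ℕ → E → E := fun N x => ∑ j ∈ Finset.range N, b j x • e j with hP
  have hQP : ∀ (x : E) (M N : ℕ), M ≤ N → ‖Q N x - Q M x‖ ≤ c⁻¹ * ‖P N x - P M x‖ := by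
    intro x M N hMN
    have h1 : Q N x - Q M x = ∑ j ∈ Finset.Ico M N, b j x • e (n j) := by
      rw [hQ]
      simp only
      rw [Finset.sum_Ico_eq_sub _ hMN]
    have h2 : P N x - P M x = ∑ j ∈ Finset.Ico M N, b j x • e j := by
      rw [hP]
      simp only
      rw [Finset.sum_Ico_eq_sub _ hMN]
    rw [h1, h2]
    exact hupper (fun j => b j x) (Finset.Ico M N)
  have hcauchy : ∀ x : E, CauchySeq (fun N => Q N x) := by
    intro x
    rw [Metric.cauchySeq_iff]
    intro ε hε
    have hPc : CauchySeq (fun N => P N x) := (hexp x).cauchySeq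
    rw [Metric.cauchySeq_iff] at hPc
    obtain ⟨N₀, hN₀⟩ := hPc (c * ε) (by positivity)
    refine ⟨N₀, fun p hp q hq => ?_⟩
    have key : ∀ p q, N₀ ≤ p → N₀ ≤ q → q ≤ p → dist (Q p x) (Q q x) < ε := by
      intro p q hp hq hqp
      rw [dist_eq_norm]
      calc ‖Q p x - Q q x‖ ≤ c⁻¹ * ‖P p x - P q x‖ := hQP x q p hqp
        _ < c⁻¹ * (c * ε) := by
            apply mul_lt_mul_of_pos_left _ (by positivity)
            rw [← dist_eq_norm]
            exact hN₀ p hp q hq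
        _ = ε := by field_simp
    rcases le_total q p with h | h
    · exact key p q hp hq h
    · rw [dist_comm]; exact key q p hq hp h
  have hL : ∀ x : E, ∃ L, Tendsto (fun N => Q N x) atTop (nhds L) := fun x =>
    cauchySeq_tendsto_of_complete (hcauchy x)
  choose Sf hSf using hL
  have hadd : ∀ x y, Sf (x + y) = Sf x + Sf y := by
    intro x y
    have h1 : Tendsto (fun N => Q N (x + y)) atTop (nhds (Sf x + Sf y)) := by
      have : (fun N => Q N (x + y)) = fun N => Q N x + Q N y := by
        funext N
        simp only [hQ, ← Finset.sum_add_distrib, map_add, add_smul]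
      rw [this]
      exact (hSf x).add (hSf y)
    exact tendsto_nhds_unique (hSf (x + y)) h1
  have hsmul : ∀ (r : ℝ) (x : E), Sf (r • x) = r • Sf x := by
    intro r x
    have h1 : Tendsto (fun N => Q N (r • x)) atTop (nhds (r • Sf x)) := by
      have : (fun N => Q N (r • x)) = fun N => r • Q N x := by
        funext N
        simp only [hQ, Finset.smul_sum, map_smul, smul_smul, smul_eq_mul]
      rw [this]
      exact (hSf x).const_smul r
    exact tendsto_nhds_unique (hSf (r • x)) h1
  have hbound : ∀ x, ‖Sf x‖ ≤ c⁻¹ * ‖x‖ := by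
    intro x
    have h1 : Tendsto (fun N => ‖Q N x‖) atTop (nhds ‖Sf x‖) := (hSf x).norm
    have h2 : Tendsto (fun N => c⁻¹ * ‖P N x‖) atTop (nhds (c⁻¹ * ‖x‖)) :=
      (hexp x).norm.const_mul c⁻¹
    refine le_of_tendsto_of_tendsto' h1 h2 fun N => ?_
    exact hupper (fun j => b j x) (Finset.range N)
  set Slin : E →ₗ[ℝ] E := { toFun := Sf, map_add' := hadd, map_smul' := hsmul } with hSlin
  refine ⟨LinearMap.mkContinuous Slin c⁻¹ hbound, ?_, fun x => hbound x⟩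
  intro a s
  have hcoeff : ∀ j, b j (∑ k ∈ s, a k • e k) = if j ∈ s then a j else 0 := by
    intro j
    rw [map_sum]
    simp only [map_smul, hbio, smul_eq_mul]
    rw [Finset.sum_congr rfl (fun k hk => ?_), Finset.sum_ite_eq' s j a]
    rw [mul_ite, mul_one, mul_zero]
    congr 1
    · exact propext eq_comm
  have hev : ∀ N, s.sup id + 1 ≤ N → Q N (∑ k ∈ s, a k • e k) = ∑ k ∈ s, a k • e (n k) := by
    intro N hN
    rw [hQ]
    simp only
    rw [Finset.sum_congr rfl (fun j _ => by rw [hcoeff j, ite_smul, zero_smul])]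
    rw [Finset.sum_ite_mem]
    congr 1
    rw [Finset.inter_eq_right]
    intro k hk
    exact Finset.mem_range.mpr (lt_of_le_of_lt (Finset.le_sup (f := id) hk) (by omega))
  have h1 : Tendsto (fun N => Q N (∑ k ∈ s, a k • e k)) atTop
      (nhds (∑ k ∈ s, a k • e (n k))) := by
    apply tendsto_atTop_of_eventually_const (i₀ := s.sup id + 1)
    exact fun N hN => hev N hN
  exact tendsto_nhds_unique (hSf _) h1

lemma closed_image_of_lower (A : E →L[ℝ] E) (κ : ℝ) (hκ : 0 < κ)
    (hA : ∀ x, ‖x‖ ≤ κ * ‖A x‖) (s : Set E) (hs : IsClosed s) : IsClosed (A '' s) := by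
  rw [← isSeqClosed_iff_isClosed]
  intro u z hu hz
  choose x hx hAx using hu
  have hucauchy : CauchySeq u := hz.cauchySeq
  have hcx : CauchySeq x := by
    rw [Metric.cauchySeq_iff]
    intro ε hε
    rw [Metric.cauchySeq_iff] at hucauchy
    obtain ⟨N₀, hN₀⟩ := hucauchy (ε / κ) (by positivity)
    refine ⟨N₀, fun p hp q hq => ?_⟩
    have h1 : ‖x p - x q‖ ≤ κ * ‖A (x p) - A (x q)‖ := by
      have := hA (x p - x q)
      rwa [map_sub] at this
    rw [dist_eq_norm]
    calc ‖x p - x q‖ ≤ κ * ‖A (x p) - A (x q)‖ := h1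
      _ = κ * dist (u p) (u q) := by rw [dist_eq_norm, hAx p, hAx q]
      _ < κ * (ε / κ) := by
          exact mul_lt_mul_of_pos_left (hN₀ p hp q hq) hκ
      _ = ε := by field_simp
  obtain ⟨x₀, hx₀⟩ := cauchySeq_tendsto_of_complete hcx
  have hx₀s : x₀ ∈ s := hs.mem_of_tendsto hx₀ (Eventually.of_forall hx)
  have hz' : z = A x₀ := by
    have h1 : Tendsto (fun k => A (x k)) atTop (nhds (A x₀)) :=
      (A.continuous.tendsto x₀).comp hx₀
    have h2 : Tendsto (fun k => A (x k)) atTop (nhds z) := by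
      have : (fun k => A (x k)) = u := funext hAx
      rwa [this]
    exact tendsto_nhds_unique h2 h1
  exact ⟨x₀, hx₀s, hz'.symm⟩

lemma factor_through (A : E →L[ℝ] E) (κ : ℝ) (hκ : 0 < κ)
    (hA : ∀ x, ‖x‖ ≤ κ * ‖A x‖) (f : E →L[ℝ] ℝ) :
    ∃ g : E →L[ℝ] ℝ, ∀ x, g (A x) = f x := by
  have hinj0 : ∀ x : E, A x = 0 → x = 0 := by
    intro x hx
    have h1 : ‖x‖ ≤ κ * ‖A x‖ := hA _
    rw [hx, norm_zero, mul_zero] at h1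
    have : ‖x‖ = 0 := le_antisymm h1 (norm_nonneg _)
    rwa [norm_eq_zero] at this
  have hrangeclosed : IsClosed ((LinearMap.range (A : E →ₗ[ℝ] E) : Submodule ℝ E) : Set E) := by
    have : ((LinearMap.range (A : E →ₗ[ℝ] E) : Submodule ℝ E) : Set E) = A '' Set.univ := by
      rw [Set.image_univ]
      rfl
    rw [this]
    exact closed_image_of_lower A κ hκ hA Set.univ isClosed_univ
  set R : Submodule ℝ E := LinearMap.range (A : E →ₗ[ℝ] E) with hR
  haveI : CompleteSpace R := hrangeclosed.completeSpace_coe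
  set f₀ : E →L[ℝ] R := A.codRestrict R (fun x => LinearMap.mem_range_self _ x) with hf₀
  have hker : LinearMap.ker (f₀ : E →ₗ[ℝ] R) = ⊥ := by
    rw [Submodule.eq_bot_iff]
    intro x hx
    rw [LinearMap.mem_ker] at hx
    apply hinj0
    exact congrArg Subtype.val hx
  have hsurj : LinearMap.range (f₀ : E →ₗ[ℝ] R) = ⊤ := by
    rw [LinearMap.range_eq_top]
    rintro ⟨y, hy⟩
    obtain ⟨x, hx⟩ := hy
    exact ⟨x, Subtype.ext hx⟩
  set AE := ContinuousLinearEquiv.ofBijective f₀ hker hsurj with hAE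
  set h : R →L[ℝ] ℝ := f.comp (AE.symm : R →L[ℝ] E) with hh
  obtain ⟨g, hg, -⟩ := exists_extension_norm_eq R h
  refine ⟨g, fun x => ?_⟩
  have h1 : g (A x) = h (f₀ x) := by
    have : ((f₀ x : R) : E) = A x := rfl
    rw [← this]
    exact hg (f₀ x)
  rw [h1, hh]
  simp only [ContinuousLinearMap.comp_apply]
  have h2 : AE.symm (f₀ x) = x := by
    have : f₀ x = AE x := rfl
    rw [this, ContinuousLinearEquiv.symm_apply_apply]
  rw [ContinuousLinearEquiv.coe_coe, h2]

lemma pullback_compact (A : E →L[ℝ] E) (κ : ℝ) (hκ : 0 < κ)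
    (hA : ∀ x, ‖x‖ ≤ κ * ‖A x‖) (Kc : Set (WeakSpace ℝ E)) (hKc : IsCompact Kc)
    (hsub : toWeakSpace ℝ E '' (A '' Metric.closedBall 0 1) ⊆ Kc) :
    IsCompact (toWeakSpace ℝ E '' Metric.closedBall (0:E) 1) := by
  classical
  set B : Set E := Metric.closedBall (0:E) 1 with hB
  set S : Set E := A '' B with hS
  have hSclosed : IsClosed S :=
    closed_image_of_lower A κ hκ hA B Metric.isClosed_closedBall
  have hSconv : Convex ℝ S := (convex_closedBall (0:E) 1).linear_image (A : E →ₗ[ℝ] E)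
  have hwclosed : IsClosed (toWeakSpace ℝ E '' S) := by
    have h1 := hSconv.toWeakSpace_closure (𝕜 := ℝ)
    rw [hSclosed.closure_eq] at h1
    rw [h1]
    exact isClosed_closure
  rw [isCompact_iff_ultrafilter_le_nhds]
  intro F hF
  have hCF : toWeakSpace ℝ E '' B ∈ F := le_principal_iff.mp hF
  set φ : WeakSpace ℝ E →L[ℝ] WeakSpace ℝ E := WeakSpace.map A with hφ
  set G : Ultrafilter (WeakSpace ℝ E) := F.map φ with hG
  have hpoint : ∀ x : E, φ (toWeakSpace ℝ E x) = toWeakSpace ℝ E (A x) := fun x => rfl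
  have himg : φ '' (toWeakSpace ℝ E '' B) = toWeakSpace ℝ E '' S := by
    rw [hS, Set.image_image, Set.image_image]
    exact Set.image_congr fun x _ => hpoint x
  have hmemG : toWeakSpace ℝ E '' S ∈ (G : Filter (WeakSpace ℝ E)) := by
    rw [hG, Ultrafilter.coe_map, Filter.mem_map]
    apply Filter.mem_of_superset hCF
    intro x hx
    rw [Set.mem_preimage, ← himg]
    exact Set.mem_image_of_mem φ hx
  have hKcG : Kc ∈ (G : Filter (WeakSpace ℝ E)) := Filter.mem_of_superset hmemG hsub
  obtain ⟨w, _, hGw⟩ := hKc.ultrafilter_le_nhds G (le_principal_iff.mpr hKcG)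
  have hwS : w ∈ toWeakSpace ℝ E '' S := by
    have hnb : (nhds w ⊓ Filter.principal (toWeakSpace ℝ E '' S)).NeBot :=
      Filter.neBot_of_le (f := (G : Filter (WeakSpace ℝ E)))
        (le_inf hGw (le_principal_iff.mpr hmemG))
    have := mem_closure_iff_clusterPt.mpr hnb
    rwa [hwclosed.closure_eq] at this
  obtain ⟨z, hzS, hzw⟩ := hwS
  obtain ⟨y, hyB, hyz⟩ := hzS
  refine ⟨toWeakSpace ℝ E y, Set.mem_image_of_mem _ hyB, ?_⟩
  have hBinj : Function.Injective ⇑((topDualPairing ℝ E).flip) := by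
    intro x₁ x₂ h12
    have hz : ∀ f : E →L[ℝ] ℝ, f (x₁ - x₂) = 0 := by
      intro f
      have := LinearMap.congr_fun h12 f
      simp only [LinearMap.flip_apply, topDualPairing_apply] at this
      rw [map_sub, this, sub_self]
    have := NormedSpace.eq_zero_of_forall_dual_eq_zero ℝ hz
    rwa [sub_eq_zero] at this
  have htendsto : Tendsto (id : WeakSpace ℝ E → WeakSpace ℝ E) ↑F
      (nhds (toWeakSpace ℝ E y)) := by
    refine (WeakBilin.tendsto_iff_forall_eval_tendsto (B := (topDualPairing ℝ E).flip)
      (f := id) (x := toWeakSpace ℝ E y) hBinj).mpr ?_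
    intro f
    simp only [LinearMap.flip_apply, topDualPairing_apply, id_eq]
    obtain ⟨g, hg⟩ := factor_through A κ hκ hA f
    have hevalg : Continuous fun v : WeakSpace ℝ E => (topDualPairing ℝ E).flip v g :=
      WeakBilin.eval_continuous _ g
    have h2 : Tendsto (fun v : WeakSpace ℝ E => (topDualPairing ℝ E).flip v g)
        (G : Filter (WeakSpace ℝ E)) (nhds ((topDualPairing ℝ E).flip w g)) :=
      (hevalg.tendsto w).comp hGw
    rw [hG, Ultrafilter.coe_map, Filter.tendsto_map'_iff] at h2
    have h3 : (fun v : WeakSpace ℝ E => (topDualPairing ℝ E).flip v g) ∘ φ =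
        fun v : WeakSpace ℝ E => g (A ((toWeakSpace ℝ E).symm v)) := rfl
    rw [h3] at h2
    have h4 : (fun v : WeakSpace ℝ E => g (A ((toWeakSpace ℝ E).symm v))) =
        fun v : WeakSpace ℝ E => f ((toWeakSpace ℝ E).symm v) := by
      funext v
      exact hg _
    rw [h4] at h2
    have h5 : (topDualPairing ℝ E).flip w g = f y := by
      rw [← hzw, ← hyz]
      change g (A y) = f y
      exact hg y
    have h6 : f ((toWeakSpace ℝ E).symm (toWeakSpace ℝ E y)) = f y := by
      rw [LinearEquiv.symm_apply_apply]
    rw [h5] at h2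
    exact h2
  exact htendsto

end Aux2


/-- A set is weakly compact if it is compact in the weak topology. -/
def IsWeaklyCompact {E : Type*} [NormedAddCommGroup E] [NormedSpace ℝ E] (D : Set E) : Prop :=
  IsCompact (toWeakSpace ℝ E '' D)

/-- An operator is weakly compact if the image of the closed unit ball is relatively
compact in the weak topology. -/
def IsWeaklyCompactOp {E F : Type*} [NormedAddCommGroup E] [NormedSpace ℝ E]
    [NormedAddCommGroup F] [NormedSpace ℝ F] (V : E →L[ℝ] F) : Prop :=
  IsCompact (closure (toWeakSpace ℝ F '' (V '' Metric.closedBall 0 1)))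

/-- `E` has the W.A.P. with constant `C`. -/
def HasWAPWith (E : Type*) [NormedAddCommGroup E] [NormedSpace ℝ E] (C : ℝ) : Prop :=
  ∀ D : Set E, IsWeaklyCompact D → ∀ ε : ℝ, 0 < ε →
    ∃ V : E →L[ℝ] E, IsWeaklyCompactOp V ∧ ‖V‖ ≤ C ∧ ∀ x ∈ D, ‖x - V x‖ < ε

theorem stmt_15 {E : Type*} [NormedAddCommGroup E] [NormedSpace ℝ E] [CompleteSpace E]
    (hnonrefl : ¬ IsWeaklyCompact (Metric.closedBall (0 : E) 1))
    (e : ℕ → E) (b : ℕ → E →L[ℝ] ℝ)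
    (hbio : ∀ i j, b i (e j) = if i = j then 1 else 0)
    (hexp : ∀ x : E, Tendsto (fun n => ∑ j ∈ Finset.range n, b j x • e j) atTop (nhds x))
    (K : ℝ)
    (huncond : ∀ (a : ℕ → ℝ) (s t : Finset ℕ), s ⊆ t →
      ‖∑ j ∈ s, a j • e j‖ ≤ K * ‖∑ j ∈ t, a j • e j‖)
    (hsubsym : ∀ m : ℕ → ℕ, StrictMono m → ∃ c : ℝ, 0 < c ∧
      ∀ (a : ℕ → ℝ) (s : Finset ℕ),
        c * ‖∑ j ∈ s, a j • e j‖ ≤ ‖∑ j ∈ s, a j • e (m j)‖ ∧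
        ‖∑ j ∈ s, a j • e (m j)‖ ≤ c⁻¹ * ‖∑ j ∈ s, a j • e j‖)
    (hweaknull : Tendsto (fun n => toWeakSpace ℝ E (e n)) atTop (nhds 0)) :
    IsWeaklyCompact (Set.range e ∪ {0}) ∧
      ∃ ε : ℝ, 0 < ε ∧ ∀ V : E →L[ℝ] E,
        (∀ n, ‖e n - V (e n)‖ < ε) → ¬ IsWeaklyCompactOp V := by
  classical
  constructor
  · -- Part 1: D is weakly compact
    show IsCompact (toWeakSpace ℝ E '' (Set.range e ∪ {0}))
    have h0 : toWeakSpace ℝ E '' (Set.range e ∪ {0}) =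
        insert (0 : WeakSpace ℝ E) (Set.range fun n => toWeakSpace ℝ E (e n)) := by
      rw [Set.image_union, Set.image_singleton, map_zero, Set.union_singleton,
        ← Set.range_comp]
      rfl
    rw [h0]
    exact hweaknull.isCompact_insert_range
  · -- Part 2
    have hepos : ∀ i, (0:ℝ) < ‖e i‖ := fun i => norm_pos_iff.mpr (e_ne_zero e b hbio i)
    have hK1 : (1:ℝ) ≤ K := by
      have h := huncond (fun _ => 1) {0} {0} (Finset.Subset.refl _)
      simp only [Finset.sum_singleton, one_smul] at h
      nlinarith [hepos 0]
    have hK0 : (0:ℝ) < K := by linarith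
    obtain ⟨δ, hδ, hδle⟩ := exists_delta e b hbio hsubsym
    have hbnorm : ∀ (i : ℕ) (x : E), |b i x| ≤ (K/δ) * ‖x‖ := by
      intro i x
      have h1 := bnorm_bound e b hexp K huncond i x
      have h2 : |b i x| * δ ≤ |b i x| * ‖e i‖ :=
        mul_le_mul_of_nonneg_left (hδle i) (abs_nonneg _)
      rw [div_mul_eq_mul_div, le_div_iff₀ hδ]
      linarith
    refine ⟨δ/(4*K), by positivity, ?_⟩
    intro V hV hVwc
    -- the diagonal coefficients
    set τ : ℕ → ℝ := fun i => b i (V (e i)) with hτdef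
    have hτ : ∀ i, |τ i - 1| ≤ 1/2 := by
      intro i
      have h1 : τ i - 1 = b i (V (e i) - e i) := by
        rw [map_sub, hbio]
        simp [hτdef]
      rw [h1]
      have h2 := hbnorm i (V (e i) - e i)
      have h3 : ‖V (e i) - e i‖ < δ/(4*K) := by
        rw [norm_sub_rev]; exact hV i
      have h4 : (K/δ) * ‖V (e i) - e i‖ ≤ (K/δ) * (δ/(4*K)) :=
        mul_le_mul_of_nonneg_left h3.le (by positivity)
      have h5 : (K/δ) * (δ/(4*K)) = 1/4 := by field_simp
      calc |b i (V (e i) - e i)| ≤ (K/δ) * ‖V (e i) - e i‖ := h2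
        _ ≤ 1/4 := by rw [← h5]; exact h4
        _ ≤ 1/2 := by norm_num
    have hτlb : ∀ i, 1/2 ≤ τ i := by
      intro i
      have := abs_le.mp (hτ i)
      linarith [this.1]
    have hτpos : ∀ i, 0 < τ i := fun i => lt_of_lt_of_le (by norm_num) (hτlb i)
    have hτinv : ∀ i, |(τ i)⁻¹| ≤ 2 := by
      intro i
      rw [abs_of_pos (inv_pos.mpr (hτpos i))]
      rw [inv_le_comm₀ (hτpos i) (by norm_num)]
      linarith [hτlb i]
    -- the perturbation parameters
    set q : ℝ := δ/(8*K^2*(2*K+1)) with hq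
    have hqpos : 0 < q := by positivity
    set η : ℕ → ℝ := fun k => q * (1/2)^k with hηdef
    have hηpos : ∀ k, 0 < η k := fun k => by positivity
    -- weak nullity through V
    have hwk : ∀ i : ℕ, Tendsto (fun m => b i (V (e m))) atTop (nhds 0) := by
      intro i
      set f : E →L[ℝ] ℝ := (b i).comp V with hf
      have hev : Continuous fun w : WeakSpace ℝ E => (topDualPairing ℝ E).flip w f :=
        WeakBilin.eval_continuous _ f
      have h1 : Tendsto (fun m => (topDualPairing ℝ E).flip (toWeakSpace ℝ E (e m)) f)
          atTop (nhds ((topDualPairing ℝ E).flip 0 f)) :=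
        (hev.tendsto 0).comp hweaknull
      have h0 : (topDualPairing ℝ E).flip 0 f = 0 := map_zero f
      have h2 : Tendsto (fun m => b i (V (e m))) atTop
          (nhds ((topDualPairing ℝ E).flip 0 f)) := h1
      rwa [h0] at h2
    obtain ⟨n, N, hN0, hwin, hsmallc, htail⟩ := gliding_hump e b V hexp hwk η hηpos
    have hnmono : StrictMono n := by
      apply strictMono_nat_of_lt_succ
      intro k
      exact lt_of_lt_of_le (hwin k).2 (hwin (k+1)).1
    have hNmono : StrictMono N := by
      apply strictMono_nat_of_lt_succ
      intro k
      exact lt_of_le_of_lt (hwin k).1 (hwin k).2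
    -- the blocks
    set u : ℕ → E := fun k =>
      ∑ i ∈ Finset.Ico (N k) (N (k+1)), b i (V (e (n k))) • e i with hu_def
    have hu : ∀ k, ‖u k - V (e (n k))‖ < η k := by
      intro k
      have hsplit : u k = (∑ i ∈ Finset.range (N (k+1)), b i (V (e (n k))) • e i)
          - ∑ i ∈ Finset.range (N k), b i (V (e (n k))) • e i := by
        rw [hu_def]
        simp only
        rw [Finset.sum_Ico_eq_sub _ (hNmono.monotone (Nat.le_succ k))]
      have h1 : ‖∑ i ∈ Finset.range (N k), b i (V (e (n k))) • e i‖
          ≤ ∑ i ∈ Finset.range (N k), |b i (V (e (n k)))| * ‖e i‖ := by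
        refine le_trans (norm_sum_le _ _) ?_
        apply Finset.sum_le_sum
        intro i _
        rw [norm_smul, Real.norm_eq_abs]
      calc ‖u k - V (e (n k))‖
          = ‖((∑ i ∈ Finset.range (N (k+1)), b i (V (e (n k))) • e i) - V (e (n k)))
              - ∑ i ∈ Finset.range (N k), b i (V (e (n k))) • e i‖ := by
            rw [hsplit]; congr 1; abel
        _ ≤ ‖(∑ i ∈ Finset.range (N (k+1)), b i (V (e (n k))) • e i) - V (e (n k))‖
            + ‖∑ i ∈ Finset.range (N k), b i (V (e (n k))) • e i‖ := norm_sub_le _ _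
        _ < η k / 2 + η k / 2 := by
            apply add_lt_add_of_lt_of_le
            · rw [norm_sub_rev]; exact htail k
            · exact le_of_lt (lt_of_le_of_lt h1 (hsmallc k))
        _ = η k := by ring
    -- window index function
    set kidx : ℕ → ℕ := fun i => Nat.findGreatest (fun k => N k ≤ i) i with hkidx_def
    have hkidx : ∀ k i, N k ≤ i → i < N (k+1) → kidx i = k := by
      intro k i h1 h2
      rw [hkidx_def]
      simp only
      rw [Nat.findGreatest_eq_iff]
      refine ⟨?_, fun _ => h1, ?_⟩
      · calc k ≤ N k := hNmono.le_apply
          _ ≤ i := h1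
      · intro m hm hmi
        intro hNm
        have : N (k+1) ≤ N m := hNmono.monotone hm
        omega
    -- key lower estimate for V on the span of the subsequence
    set C : ℝ := (2*(2*K+1))*K with hC
    have hCpos : 0 < C := by positivity
    have key : ∀ (a : ℕ → ℝ) (s : Finset ℕ),
        ‖∑ k ∈ s, a k • e (n k)‖ ≤ (2*C) * ‖V (∑ k ∈ s, a k • e (n k))‖ := by
      intro a s
      set y : E := ∑ k ∈ s, a k • e (n k) with hy
      set z : E := ∑ k ∈ s, a k • u k with hz
      set W : Finset ℕ := s.biUnion (fun k => Finset.Ico (N k) (N (k+1))) with hW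
      set g : ℕ → ℝ := fun i => a (kidx i) * b i (V (e (n (kidx i)))) with hg
      -- z as a basis expansion
      have hmemwin : ∀ k i, i ∈ Finset.Ico (N k) (N (k+1)) → kidx i = k := by
        intro k i hi
        rw [Finset.mem_Ico] at hi
        exact hkidx k i hi.1 hi.2
      have hdisj : ∀ k ∈ s, ∀ k' ∈ s, k ≠ k' →
          Disjoint (Finset.Ico (N k) (N (k+1))) (Finset.Ico (N k') (N (k'+1))) := by
        intro k _ k' _ hkk'
        rw [Finset.disjoint_left]
        intro i hi hi'
        exact hkk' ((hmemwin k i hi).symm.trans (hmemwin k' i hi'))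
      have hzW : z = ∑ i ∈ W, g i • e i := by
        rw [hW, Finset.sum_biUnion hdisj, hz]
        apply Finset.sum_congr rfl
        intro k hk
        rw [hu_def]
        simp only
        rw [Finset.smul_sum]
        apply Finset.sum_congr rfl
        intro i hi
        rw [hg]
        simp only
        rw [hmemwin k i hi, smul_smul]
      -- n k lies in window k
      have hnwin : ∀ k, n k ∈ Finset.Ico (N k) (N (k+1)) := by
        intro k
        rw [Finset.mem_Ico]
        exact hwin k
      have hTW : s.image n ⊆ W := by
        intro i hi
        rw [Finset.mem_image] at hi
        obtain ⟨k, hk, rfl⟩ := hi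
        rw [hW, Finset.mem_biUnion]
        exact ⟨k, hk, hnwin k⟩
      have hgnk : ∀ k, g (n k) = a k * τ (n k) := by
        intro k
        rw [hg]
        simp only
        rw [hmemwin k (n k) (hnwin k)]
      -- restriction estimate
      have h1 : ‖∑ i ∈ s.image n, g i • e i‖ ≤ K * ‖z‖ := by
        rw [hzW]
        exact huncond g (s.image n) W hTW
      -- y as a multiplied version
      have hy2 : y = ∑ i ∈ s.image n, ((τ i)⁻¹ * g i) • e i := by
        rw [Finset.sum_image (fun k _ k' _ h => hnmono.injective h), hy]
        apply Finset.sum_congr rfl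
        intro k _
        rw [hgnk k]
        congr 1
        have hτne : τ (n k) ≠ 0 := ne_of_gt (hτpos (n k))
        rw [inv_mul_eq_div, mul_div_assoc, div_self hτne, mul_one]
      have h2 : ‖y‖ ≤ (2*(2*K+1)) * ‖∑ i ∈ s.image n, g i • e i‖ := by
        rw [hy2]
        exact mult_bound e K huncond g (fun i => (τ i)⁻¹) (s.image n)
          (fun i _ => hτinv i)
      have h3 : ‖y‖ ≤ C * ‖z‖ := by
        calc ‖y‖ ≤ (2*(2*K+1)) * ‖∑ i ∈ s.image n, g i • e i‖ := h2
          _ ≤ (2*(2*K+1)) * (K * ‖z‖) := by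
              apply mul_le_mul_of_nonneg_left h1 (by positivity)
          _ = C * ‖z‖ := by rw [hC]; ring
      -- coefficients of y
      have hcoef : ∀ k ∈ s, b (n k) y = a k := by
        intro k hk
        rw [hy, map_sum]
        have : ∀ k' ∈ s, b (n k) (a k' • e (n k')) = if k' = k then a k' else 0 := by
          intro k' _
          rw [map_smul, hbio, smul_eq_mul]
          by_cases h : k' = k
          · subst h; simp
          · rw [if_neg (fun hh => h (hnmono.injective hh).symm), if_neg h, mul_zero]
        rw [Finset.sum_congr rfl this, Finset.sum_ite_eq' s k a, if_pos hk]
      have hak : ∀ k ∈ s, |a k| ≤ (K/δ) * ‖y‖ := by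
        intro k hk
        rw [← hcoef k hk]
        exact hbnorm (n k) y
      -- comparing z with V y
      have hVy : V y = ∑ k ∈ s, a k • V (e (n k)) := by
        rw [hy, map_sum]
        simp only [map_smul]
      have h4 : ‖z - V y‖ ≤ ∑ k ∈ s, |a k| * η k := by
        rw [hVy, hz, ← Finset.sum_sub_distrib]
        refine le_trans (norm_sum_le _ _) ?_
        apply Finset.sum_le_sum
        intro k _
        rw [← smul_sub, norm_smul, Real.norm_eq_abs]
        exact mul_le_mul_of_nonneg_left (hu k).le (abs_nonneg _)
      have h5 : ∑ k ∈ s, |a k| * η k ≤ (K/δ) * ‖y‖ * (2*q) := by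
        calc ∑ k ∈ s, |a k| * η k
            ≤ ∑ k ∈ s, ((K/δ) * ‖y‖) * η k := by
              apply Finset.sum_le_sum
              intro k hk
              exact mul_le_mul_of_nonneg_right (hak k hk) (hηpos k).le
          _ = ((K/δ) * ‖y‖) * ∑ k ∈ s, η k := by rw [Finset.mul_sum]
          _ ≤ ((K/δ) * ‖y‖) * (q * 2) := by
              apply mul_le_mul_of_nonneg_left _ (by positivity)
              rw [hηdef]
              simp only
              rw [← Finset.mul_sum]
              exact mul_le_mul_of_nonneg_left (geom_half_sum_le_two s) hqpos.le
          _ = (K/δ) * ‖y‖ * (2*q) := by ring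
      have hconst : C * ((K/δ) * (2*q)) = 1/2 := by
        rw [hC, hq]
        field_simp
        ring
      have h6 : ‖z‖ ≤ ‖V y‖ + (K/δ) * ‖y‖ * (2*q) := by
        calc ‖z‖ ≤ ‖V y‖ + ‖z - V y‖ := by
              have := norm_add_le (V y) (z - V y)
              simpa using this
          _ ≤ ‖V y‖ + (K/δ) * ‖y‖ * (2*q) := by linarith [le_trans h4 h5]
      have h7 : ‖y‖ ≤ C * ‖V y‖ + (1/2) * ‖y‖ := by
        calc ‖y‖ ≤ C * ‖z‖ := h3
          _ ≤ C * (‖V y‖ + (K/δ) * ‖y‖ * (2*q)) :=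
              mul_le_mul_of_nonneg_left h6 hCpos.le
          _ = C * ‖V y‖ + (C * ((K/δ) * (2*q))) * ‖y‖ := by ring
          _ = C * ‖V y‖ + (1/2) * ‖y‖ := by rw [hconst]
      linarith
    -- subsymmetry: compare with the original basis
    obtain ⟨c, hc, hcin⟩ := hsubsym n hnmono
    obtain ⟨S, hSact, hSbound⟩ := build_S e b hbio hexp n c hc (fun a s => (hcin a s).2)
    set A : E →L[ℝ] E := V.comp S with hA
    set κ : ℝ := 2*C/c with hκdef
    have hκpos : 0 < κ := by positivity
    have hAlow : ∀ x, ‖x‖ ≤ κ * ‖A x‖ := by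
      have hspan : ∀ x ∈ Submodule.span ℝ (Set.range e), ‖x‖ ≤ κ * ‖A x‖ := by
        intro x hx
        rw [Finsupp.mem_span_range_iff_exists_finsupp] at hx
        obtain ⟨co, hco⟩ := hx
        rw [Finsupp.sum] at hco
        subst hco
        set s := co.support
        have hSx : S (∑ i ∈ s, co i • e i) = ∑ i ∈ s, co i • e (n i) := hSact co s
        have h1 : c * ‖∑ i ∈ s, co i • e i‖ ≤ ‖∑ i ∈ s, co i • e (n i)‖ :=
          (hcin co s).1
        have h2 : ‖∑ i ∈ s, co i • e (n i)‖ ≤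
            (2*C) * ‖V (∑ i ∈ s, co i • e (n i))‖ := key co s
        have h3 : A (∑ i ∈ s, co i • e i) = V (∑ i ∈ s, co i • e (n i)) := by
          rw [hA, ContinuousLinearMap.comp_apply, hSx]
        rw [h3]
        calc ‖∑ i ∈ s, co i • e i‖ ≤ c⁻¹ * ‖∑ i ∈ s, co i • e (n i)‖ := by
              rw [← le_div_iff₀' hc] at h1
              rwa [div_eq_inv_mul] at h1
          _ ≤ c⁻¹ * ((2*C) * ‖V (∑ i ∈ s, co i • e (n i))‖) :=
              mul_le_mul_of_nonneg_left h2 (by positivity)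
          _ = κ * ‖V (∑ i ∈ s, co i • e (n i))‖ := by
              rw [hκdef]; ring
      have hclosed : IsClosed {x : E | ‖x‖ ≤ κ * ‖A x‖} :=
        isClosed_le continuous_norm (continuous_const.mul A.continuous.norm)
      have hdense : ∀ x : E, x ∈ closure ((Submodule.span ℝ (Set.range e) : Submodule ℝ E) :
          Set E) := by
        intro x
        apply mem_closure_of_tendsto (hexp x)
        apply Eventually.of_forall
        intro m
        apply Submodule.sum_mem
        intro j _
        exact Submodule.smul_mem _ _ (Submodule.subset_span (Set.mem_range_self j))
      intro x
      have := closure_minimal (fun y hy => hspan y hy) hclosed (hdense x)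
      exact this
    -- transfer weak compactness
    set r : ℝ := c⁻¹ with hr
    have hrpos : 0 < r := by positivity
    set Kc : Set (WeakSpace ℝ E) := (fun w : WeakSpace ℝ E => r • w) ''
      closure (toWeakSpace ℝ E '' (V '' Metric.closedBall 0 1)) with hKcdef
    have hsubset : toWeakSpace ℝ E '' (A '' Metric.closedBall 0 1) ⊆ Kc := by
      rintro w ⟨z, ⟨x, hx, rfl⟩, rfl⟩
      rw [Metric.mem_closedBall, dist_zero_right] at hx
      have hSx : ‖S x‖ ≤ r := by
        calc ‖S x‖ ≤ c⁻¹ * ‖x‖ := hSbound x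
          _ ≤ c⁻¹ * 1 := mul_le_mul_of_nonneg_left hx (by positivity)
          _ = r := by rw [hr, mul_one]
      have hmem : r⁻¹ • S x ∈ Metric.closedBall (0:E) 1 := by
        rw [Metric.mem_closedBall, dist_zero_right, norm_smul, Real.norm_eq_abs,
          abs_of_pos (by positivity)]
        rw [inv_mul_le_iff₀ hrpos, mul_one]
        exact hSx
      refine ⟨toWeakSpace ℝ E (V (r⁻¹ • S x)), ?_, ?_⟩
      · exact subset_closure ⟨V (r⁻¹ • S x), ⟨r⁻¹ • S x, hmem, rfl⟩, rfl⟩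
      · show r • toWeakSpace ℝ E (V (r⁻¹ • S x)) = toWeakSpace ℝ E (A x)
        rw [← map_smul (toWeakSpace ℝ E), ← map_smul V, smul_smul,
          mul_inv_cancel₀ (ne_of_gt hrpos), one_smul]
        rfl
    haveI : ContinuousSMul ℝ (WeakSpace ℝ E) :=
      WeakBilin.instContinuousSMul ((topDualPairing ℝ E).flip)
    have hKc : IsCompact Kc := hVwc.image (continuous_const_smul r)
    have hfinal := pullback_compact A κ hκpos hAlow Kc hKc hsubset
    exact hnonrefl hfinal
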